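/- Under the assumptions of the block gossip model (r1, r2 ≥ 1, at least one stubborn agent, w_s, w_d > 0, w_s(n1²+n2²) + 2 w_d n1 n2 = 1), the spectral radius of the expected regular-agent update matrix A̅ is strictly less than 1, so that I - A̅ is invertible. -/

import Mathlib

open Matrix BigOperators

/-- The expected regular-agent update matrix `A̅` of the two-community block gossip model. -/
def Abar (n1 n2 r1 r2 : ℕ) (ws wd : ℝ) :
    Matrix (Fin (r1 + r2)) (Fin (r1 + r2)) ℝ :=
  fun k l =>
    if (k : ℕ) < r1 then
      if (l : ℕ) < r1 then (if k = l then 1 - ws * n1 - wd * n2 else 0) + ws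
      else wd
    else
      if (l : ℕ) < r1 then wd
      else (if k = l then 1 - ws * n2 - wd * n1 else 0) + ws

attribute [local instance] Matrix.linftyOpNormedRing Matrix.linftyOpNormedAlgebra
  Matrix.linftyOpNormedAddCommGroup Matrix.linftyOpNormedSpace

set_option maxHeartbeats 1000000 in
/-- The spectral radius of `A̅` is strictly less than one, hence `I - A̅` is invertible. -/
theorem stmt_5 (n1 n2 r1 r2 : ℕ) (hr1 : 1 ≤ r1) (hr2 : 1 ≤ r2)
    (h1 : r1 ≤ n1) (h2 : r2 ≤ n2) (hs : r1 + r2 < n1 + n2)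
    (ws wd : ℝ) (hws : 0 < ws) (hwd : 0 < wd)
    (hnorm : ws * ((n1 : ℝ)^2 + (n2 : ℝ)^2) + 2 * wd * n1 * n2 = 1) :
    (∀ μ ∈ spectrum ℂ ((Abar n1 n2 r1 r2 ws wd).map Complex.ofReal), ‖μ‖ < 1) ∧
    IsUnit (1 - Abar n1 n2 r1 r2 ws wd) := by
  have hn1 : (1:ℝ) ≤ n1 := by exact_mod_cast hr1.trans h1
  have hn2 : (1:ℝ) ≤ n2 := by exact_mod_cast hr2.trans h2
  have hr1' : (r1:ℝ) ≤ n1 := by exact_mod_cast h1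
  have hr2' : (r2:ℝ) ≤ n2 := by exact_mod_cast h2
  have hs' : (r1:ℝ) + r2 + 1 ≤ (n1:ℝ) + n2 := by exact_mod_cast hs
  have hd1 : 0 ≤ 1 - ws*(n1:ℝ) - wd*n2 := by nlinarith [mul_nonneg hws.le (mul_nonneg (by linarith : (0:ℝ) ≤ (n1:ℝ) - 1) (by linarith : (0:ℝ) ≤ (n1:ℝ))), mul_nonneg hwd.le (mul_nonneg (by linarith : (0:ℝ) ≤ 2*(n1:ℝ) - 1) (by linarith : (0:ℝ) ≤ (n2:ℝ))), mul_nonneg hws.le (sq_nonneg (n2:ℝ))]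
  have hd2 : 0 ≤ 1 - ws*(n2:ℝ) - wd*n1 := by nlinarith [mul_nonneg hws.le (mul_nonneg (by linarith : (0:ℝ) ≤ (n2:ℝ) - 1) (by linarith : (0:ℝ) ≤ (n2:ℝ))), mul_nonneg hwd.le (mul_nonneg (by linarith : (0:ℝ) ≤ 2*(n2:ℝ) - 1) (by linarith : (0:ℝ) ≤ (n1:ℝ))), mul_nonneg hws.le (sq_nonneg (n1:ℝ))]
  -- positivity of the "leakage"
  have hpos : 0 < ws*(n1:ℝ) + wd*(n2:ℝ) - ws*r1 - wd*r2 := by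
    rcases (sub_nonneg.mpr hr1').eq_or_lt with h|h
    · have hb : (1:ℝ) ≤ (n2:ℝ) - r2 := by linarith
      nlinarith [mul_pos hwd (show (0:ℝ) < (n2:ℝ) - r2 by linarith)]
    · nlinarith [mul_pos hws h, mul_nonneg hwd.le (by linarith : (0:ℝ) ≤ (n2:ℝ) - r2)]
  have hpos2 : 0 < ws*(n2:ℝ) + wd*(n1:ℝ) - ws*r2 - wd*r1 := by
    rcases (sub_nonneg.mpr hr2').eq_or_lt with h|h
    · nlinarith [mul_pos hwd (show (0:ℝ) < (n1:ℝ) - r1 by linarith)]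
    · nlinarith [mul_pos hws h, mul_nonneg hwd.le (by linarith : (0:ℝ) ≤ (n1:ℝ) - r1)]
  set M := Abar n1 n2 r1 r2 ws wd with hM
  have hnn : ∀ k l, 0 ≤ M k l := by
    intro k l
    simp only [hM, Abar]
    split_ifs <;> linarith
  -- row sums
  have hsum1 : ∀ i : Fin (r1+r2), (i:ℕ) < r1 →
      ∑ j, M i j = (1 - ws*n1 - wd*n2) + r1*ws + r2*wd := by
    intro i hi
    rw [Fin.sum_univ_add]
    have e1 : ∀ j : Fin r1, M i (Fin.castAdd r2 j)
        = (if j = ⟨i.1, hi⟩ then (1 - ws*n1 - wd*n2) else 0) + ws := by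
      intro j
      have hc : (i = Fin.castAdd r2 j) ↔ (j = ⟨i.1, hi⟩) := by
        rw [Fin.ext_iff, Fin.ext_iff]; simp; omega
      simp only [hM, Abar, Fin.coe_castAdd, hi, if_true, j.isLt, hc]
    have e2 : ∀ j : Fin r2, M i (Fin.natAdd r1 j) = wd := by
      intro j
      simp only [hM, Abar, Fin.coe_natAdd]
      rw [if_pos hi]
      rw [if_neg (by omega)]
    simp only [e1, e2, Finset.sum_add_distrib, Finset.sum_ite_eq', Finset.mem_univ, if_true,
      Finset.sum_const, Finset.card_univ, Fintype.card_fin, nsmul_eq_mul]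
    try ring
  have hsum2 : ∀ i : Fin (r1+r2), r1 ≤ (i:ℕ) →
      ∑ j, M i j = (1 - ws*n2 - wd*n1) + r2*ws + r1*wd := by
    intro i hi
    have hi' : ¬ ((i:ℕ) < r1) := not_lt.mpr hi
    have hi2 : (i:ℕ) - r1 < r2 := by omega
    rw [Fin.sum_univ_add]
    have e1 : ∀ j : Fin r1, M i (Fin.castAdd r2 j) = wd := by
      intro j
      simp only [hM, Abar, Fin.coe_castAdd]
      rw [if_neg hi', if_pos j.isLt]
    have e2 : ∀ j : Fin r2, M i (Fin.natAdd r1 j)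
        = (if j = ⟨i.1 - r1, hi2⟩ then (1 - ws*n2 - wd*n1) else 0) + ws := by
      intro j
      have hc : (i = Fin.natAdd r1 j) ↔ (j = ⟨i.1 - r1, hi2⟩) := by
        rw [Fin.ext_iff, Fin.ext_iff]; simp; omega
      simp only [hM, Abar, Fin.coe_natAdd, hi', if_false, hc]
      rw [if_neg (by omega)]
    simp only [e1, e2, Finset.sum_add_distrib, Finset.sum_ite_eq', Finset.mem_univ, if_true,
      Finset.sum_const, Finset.card_univ, Fintype.card_fin, nsmul_eq_mul]
    try ring
  have hrow : ∀ i : Fin (r1+r2), ∑ j, ‖M i j‖ < 1 := by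
    intro i
    have h0 : ∑ j, ‖M i j‖ = ∑ j, M i j :=
      Finset.sum_congr rfl fun j _ => Real.norm_of_nonneg (hnn i j)
    rw [h0]
    rcases lt_or_ge (i:ℕ) r1 with hi | hi
    · rw [hsum1 i hi]; nlinarith
    · rw [hsum2 i hi]; nlinarith
  have hrow' : ∀ i : Fin (r1+r2), (∑ j, ‖M i j‖₊) < 1 := by
    intro i
    rw [← NNReal.coe_lt_coe, NNReal.coe_sum, NNReal.coe_one]
    simpa [coe_nnnorm] using hrow i
  have hnormM : ‖M‖ < 1 := by
    rw [Matrix.linfty_opNorm_def]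
    rw [show (1:ℝ) = ((1:NNReal):ℝ) from rfl, NNReal.coe_lt_coe]
    exact (Finset.sup_lt_iff (by norm_num : (⊥:NNReal) < 1)).mpr fun i _ => hrow' i
  have hnormB : ‖M.map (Complex.ofReal)‖ < 1 := by
    rw [Matrix.linfty_opNorm_def]
    rw [show (1:ℝ) = ((1:NNReal):ℝ) from rfl, NNReal.coe_lt_coe]
    refine (Finset.sup_lt_iff (by norm_num : (⊥:NNReal) < 1)).mpr fun i _ => ?_
    have : ∀ j, ‖(M.map (Complex.ofReal)) i j‖₊ = ‖M i j‖₊ := by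
      intro j; simp [Matrix.map_apply, nnnorm]
    simp only [this]
    exact hrow' i
  haveI : Nonempty (Fin (r1+r2)) := ⟨⟨0, by omega⟩⟩
  haveI : CompleteSpace (Matrix (Fin (r1+r2)) (Fin (r1+r2)) ℂ) := FiniteDimensional.complete ℂ _
  haveI : CompleteSpace (Matrix (Fin (r1+r2)) (Fin (r1+r2)) ℝ) := FiniteDimensional.complete ℝ _
  constructor
  · intro μ hμ
    have hle : ‖μ‖ ≤ ‖M.map (Complex.ofReal)‖ := spectrum.norm_le_norm_of_mem hμ
    calc ‖μ‖ = ‖μ‖ := rfl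
      _ ≤ _ := hle
      _ < 1 := hnormB
  · exact isUnit_one_sub_of_norm_lt_one hnormM
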